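/- Let w, u ∈ F₂ be independent modulo F₂', i.e. exp_x(w)·exp_y(u) − exp_y(w)·exp_x(u) ≠ 0. Then for every k ≥ 2 the equation [w,u] = z^k has no solution in M₂ = F₂/F₂'': there is no z ∈ F₂ with [w,u]·z^{-k} ∈ F₂''. (Baumslag–Neumann–Neumann–Neumann.) -/

import Mathlib

/-- The total exponent of `x` in a word of the free group on `{x, y}`. -/
def expx (w : FreeGroup (Fin 2)) : ℤ :=
  Multiplicative.toAdd
    (FreeGroup.lift (fun i => Multiplicative.ofAdd (if i = 0 then (1 : ℤ) else 0)) w)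

/-- The total exponent of `y` in a word of the free group on `{x, y}`. -/
def expy (w : FreeGroup (Fin 2)) : ℤ :=
  Multiplicative.toAdd
    (FreeGroup.lift (fun i => Multiplicative.ofAdd (if i = 1 then (1 : ℤ) else 0)) w)

open scoped commutatorElement

open AddMonoidAlgebra

section
variable (p : ℕ)
abbrev SS := AddMonoidAlgebra (ZMod p) (ℤ × ℤ)
noncomputable def mg (v : ℤ × ℤ) : SS p := AddMonoidAlgebra.single v 1
lemma mg_mul_mg (v w : ℤ × ℤ) : mg p v * mg p w = mg p (v + w) := by
  simp [mg, AddMonoidAlgebra.single_mul_single]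
@[simp] lemma mg_zero : mg p 0 = 1 := rfl
lemma mg_neg_cancel (v : ℤ × ℤ) : mg p (-v) * mg p v = 1 := by
  rw [mg_mul_mg, neg_add_cancel, mg_zero]
@[ext] structure MG where
  a : SS p
  b : SS p
  v : ℤ × ℤ
namespace MG
variable {p}
noncomputable instance : Mul (MG p) := ⟨fun g h => ⟨g.a + mg p g.v * h.a, g.b + mg p g.v * h.b, g.v + h.v⟩⟩
noncomputable instance : One (MG p) := ⟨⟨0, 0, 0⟩⟩
noncomputable instance : Inv (MG p) := ⟨fun g => ⟨-(mg p (-g.v) * g.a), -(mg p (-g.v) * g.b), -g.v⟩⟩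
@[simp] lemma mul_a (g h : MG p) : (g * h).a = g.a + mg p g.v * h.a := rfl
@[simp] lemma mul_b (g h : MG p) : (g * h).b = g.b + mg p g.v * h.b := rfl
@[simp] lemma mul_v (g h : MG p) : (g * h).v = g.v + h.v := rfl
@[simp] lemma one_a : (1 : MG p).a = 0 := rfl
@[simp] lemma one_b : (1 : MG p).b = 0 := rfl
@[simp] lemma one_v : (1 : MG p).v = 0 := rfl
@[simp] lemma inv_a (g : MG p) : (g⁻¹).a = -(mg p (-g.v) * g.a) := rfl
@[simp] lemma inv_b (g : MG p) : (g⁻¹).b = -(mg p (-g.v) * g.b) := rfl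
@[simp] lemma inv_v (g : MG p) : (g⁻¹).v = -g.v := rfl
noncomputable instance : Group (MG p) where
  mul_assoc g h i := by ext <;> simp [mul_add, ← mg_mul_mg, mul_assoc, add_assoc]
  one_mul g := by ext <;> simp
  mul_one g := by ext <;> simp
  inv_mul_cancel g := by ext <;> simp [← mul_assoc, mg_neg_cancel]

/-- projection to the ℤ² part, as a hom -/
def rhom : MG p →* Multiplicative (ℤ × ℤ) where
  toFun g := Multiplicative.ofAdd g.v
  map_one' := rfl
  map_mul' g h := rfl

lemma mem_derivedOne_v {g : MG p} (hg : g ∈ derivedSeries (MG p) 1) : g.v = 0 := by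
  have h1 : derivedSeries (MG p) 1 ≤ (rhom (p := p)).ker := by
    rw [derivedSeries_succ, derivedSeries_zero, Subgroup.commutator_le]
    intro g₁ _ g₂ _
    rw [MonoidHom.mem_ker, map_commutatorElement,
      commutatorElement_eq_one_iff_mul_comm]
    exact mul_comm _ _
  have := h1 hg
  rw [MonoidHom.mem_ker] at this
  exact Multiplicative.ofAdd.injective this

lemma comm_of_v_zero {g h : MG p} (hg : g.v = 0) (hh : h.v = 0) : g * h = h * g := by
  ext <;> simp [hg, hh, add_comm]

lemma metab : derivedSeries (MG p) 2 = ⊥ := by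
  rw [eq_bot_iff]
  show derivedSeries (MG p) (1+1) ≤ ⊥
  rw [derivedSeries_succ, Subgroup.commutator_le]
  intro g₁ h₁ g₂ h₂
  rw [Subgroup.mem_bot, commutatorElement_eq_one_iff_mul_comm]
  exact comm_of_v_zero (mem_derivedOne_v h₁) (mem_derivedOne_v h₂)
end MG

noncomputable def psi : FreeGroup (Fin 2) →* MG p :=
  FreeGroup.lift (fun i => if i = 0 then ⟨1, 0, (1, 0)⟩ else ⟨0, 1, (0, 1)⟩)

def vfst : MG p →* Multiplicative ℤ where
  toFun g := Multiplicative.ofAdd g.v.1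
  map_one' := rfl
  map_mul' g h := rfl

def vsnd : MG p →* Multiplicative ℤ where
  toFun g := Multiplicative.ofAdd g.v.2
  map_one' := rfl
  map_mul' g h := rfl

lemma psi_v (g : FreeGroup (Fin 2)) : (psi p g).v = (expx g, expy g) := by
  have h1 : (vfst p).comp (psi p)
      = FreeGroup.lift (fun i => Multiplicative.ofAdd (if i = 0 then (1 : ℤ) else 0)) := by
    apply FreeGroup.ext_hom
    intro a
    fin_cases a <;> simp [psi, vfst] <;> rfl
  have h2 : (vsnd p).comp (psi p)
      = FreeGroup.lift (fun i => Multiplicative.ofAdd (if i = 1 then (1 : ℤ) else 0)) := by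
    apply FreeGroup.ext_hom
    intro a
    fin_cases a <;> simp [psi, vsnd] <;> rfl
  have e1 := DFunLike.congr_fun h1 g
  have e2 := DFunLike.congr_fun h2 g
  ext
  · exact congrArg Multiplicative.toAdd e1
  · exact congrArg Multiplicative.toAdd e2

@[simp] lemma psi_of (i : Fin 2) :
    psi p (FreeGroup.of i) = if i = 0 then ⟨1, 0, (1, 0)⟩ else ⟨0, 1, (0, 1)⟩ :=
  FreeGroup.lift_apply_of

lemma fund (g : FreeGroup (Fin 2)) :
    (psi p g).a * (mg p (1, 0) - 1) + (psi p g).b * (mg p (0, 1) - 1)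
      = mg p (psi p g).v - 1 := by
  induction g using FreeGroup.induction_on with
  | C1 => simp
  | of x =>
      rw [psi_of]
      fin_cases x <;> simp
  | inv_of x ih =>
      rw [map_inv]
      simp only [MG.inv_a, MG.inv_b, MG.inv_v]
      linear_combination (-(mg p (-(psi p (FreeGroup.of x)).v))) * ih
        - mg_neg_cancel p (psi p (FreeGroup.of x)).v
  | mul g h ihg ihh =>
      simp only [map_mul, MG.mul_a, MG.mul_b, MG.mul_v]
      linear_combination ihg + mg p (psi p g).v * ihh
        + mg_mul_mg p (psi p g).v (psi p h).v

lemma pow_v (g : MG p) (n : ℕ) : (g ^ n).v = n • g.v := by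
  induction n with
  | zero => simp
  | succ n ih => rw [pow_succ, MG.mul_v, ih, succ_nsmul]

lemma pow_a (g : MG p) (hg : g.v = 0) (n : ℕ) : (g ^ n).a = n • g.a := by
  induction n with
  | zero => simp
  | succ n ih => rw [pow_succ, MG.mul_a, ih, pow_v, hg, smul_zero, mg_zero, one_mul, succ_nsmul]

lemma pow_b (g : MG p) (hg : g.v = 0) (n : ℕ) : (g ^ n).b = n • g.b := by
  induction n with
  | zero => simp
  | succ n ih => rw [pow_succ, MG.mul_b, ih, pow_v, hg, smul_zero, mg_zero, one_mul, succ_nsmul]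

lemma comm_a (g h : MG p) :
    (⁅g, h⁆).a = (1 - mg p h.v) * g.a + (mg p g.v - 1) * h.a := by
  simp only [commutatorElement_def, MG.mul_a, MG.mul_v, MG.inv_a, MG.inv_v]
  have e1 : mg p (g.v + h.v) = mg p g.v * mg p h.v := (mg_mul_mg p _ _).symm
  have e2 : mg p (g.v + h.v + -g.v) = mg p h.v := by rw [add_neg_cancel_comm]
  rw [e2, e1]
  have c1 := mg_neg_cancel p g.v
  have c2 := mg_neg_cancel p h.v
  linear_combination (-(mg p h.v) * g.a) * c1 + (-h.a) * c2

lemma comm_b (g h : MG p) :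
    (⁅g, h⁆).b = (1 - mg p h.v) * g.b + (mg p g.v - 1) * h.b := by
  simp only [commutatorElement_def, MG.mul_b, MG.mul_v, MG.inv_b, MG.inv_v]
  have e1 : mg p (g.v + h.v) = mg p g.v * mg p h.v := (mg_mul_mg p _ _).symm
  have e2 : mg p (g.v + h.v + -g.v) = mg p h.v := by rw [add_neg_cancel_comm]
  rw [e2, e1]
  have c1 := mg_neg_cancel p g.v
  have c2 := mg_neg_cancel p h.v
  linear_combination (-(mg p h.v) * g.b) * c1 + (-h.b) * c2


lemma comm_v (g h : MG p) : (⁅g, h⁆).v = 0 := by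
  simp only [commutatorElement_def, MG.mul_v, MG.inv_v]
  abel

section prime
variable [Fact p.Prime]

lemma ksmul_zero (k : ℕ) (hp : p ∣ k) (x : SS p) : k • x = 0 := by
  haveI : NeZero p := ⟨(Fact.out : p.Prime).ne_zero⟩
  rw [nsmul_eq_mul]
  have h0 : ((k : ℕ) : SS p) = 0 := by
    rw [← map_natCast (algebraMap (ZMod p) (SS p)) k,
      (ZMod.natCast_eq_zero_iff _ _).mpr hp, map_zero]
  rw [h0, zero_mul]

lemma mg_sub_one_ne {v : ℤ × ℤ} (hv : v ≠ 0) : mg p v - 1 ≠ 0 := by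
  intro hc
  rw [sub_eq_zero] at hc
  rw [AddMonoidAlgebra.one_def] at hc
  have hc' : (AddMonoidAlgebra.single v (1 : ZMod p)) = AddMonoidAlgebra.single (0 : ℤ × ℤ) 1 := hc
  rw [AddMonoidAlgebra.single_inj] at hc'
  rcases hc' with ⟨h1, _⟩ | ⟨h1, _⟩
  · exact hv h1
  · exact one_ne_zero h1

noncomputable def rho (n : ℕ) (x : SS p) : SS p :=
  AddMonoidAlgebra.mapDomain (fun q : ℤ × ℤ => (q.1, q.2 % (n : ℤ))) x

lemma rho_add (n : ℕ) (x y : SS p) : rho p n (x + y) = rho p n x + rho p n y :=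
  AddMonoidAlgebra.mapDomain_add _ _ _

lemma amd_comp {f g : ℤ × ℤ → ℤ × ℤ} (x : SS p) :
    AddMonoidAlgebra.mapDomain (f ∘ g) x
      = AddMonoidAlgebra.mapDomain f (AddMonoidAlgebra.mapDomain g x) := by
  simp [AddMonoidAlgebra.mapDomain, Finsupp.mapDomain_comp]

lemma mg_mul_x (v : ℤ × ℤ) (x : SS p) :
    mg p v * x = AddMonoidAlgebra.mapDomain (fun q => v + q) x := by
  induction x using AddMonoidAlgebra.induction with
  | zero => simp
  | single_add a b f _ _ ih =>
      rw [mul_add, AddMonoidAlgebra.mapDomain_add, ih]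
      congr 1
      rw [show mg p v * AddMonoidAlgebra.single a b = AddMonoidAlgebra.single (v + a) (1 * b) from
        AddMonoidAlgebra.single_mul_single ..]
      rw [AddMonoidAlgebra.mapDomain_single, one_mul]

lemma rho_mg (n : ℕ) (e f : ℤ) (hf : (n : ℤ) ∣ f) (x : SS p) :
    rho p n (mg p (e, f) * x) = mg p (e, 0) * rho p n x := by
  rw [mg_mul_x, rho, rho, ← amd_comp, mg_mul_x, ← amd_comp]
  congr 1
  funext q
  obtain ⟨t, rfl⟩ := hf
  show ((e : ℤ) + q.1, ((n:ℤ) * t + q.2) % (n:ℤ)) = (e + q.1, 0 + q.2 % (n:ℤ))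
  rw [zero_add, add_comm ((n:ℤ)*t) q.2, Int.add_mul_emod_self_left]

lemma geom (n : ℕ) (m : ℤ) : (mg p (0, (n : ℤ)) - 1) ∣ (mg p (0, (n : ℤ) * m) - 1) := by
  induction m using Int.induction_on with
  | zero => simp [show mg p ((0:ℤ), (0:ℤ)) = 1 from rfl]
  | succ i ih =>
      have h : ((0:ℤ), (n:ℤ) * i) + ((0:ℤ), (n:ℤ)) = ((0:ℤ), (n:ℤ) * (i+1)) := by
        simp; ring
      have hm : mg p (0, (n:ℤ) * i) * mg p (0, (n:ℤ)) = mg p (0, (n:ℤ) * (i+1)) := by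
        rw [mg_mul_mg, h]
      have key : mg p (0, (n:ℤ) * (i + 1)) - 1
          = mg p (0, (n:ℤ) * i) * (mg p (0, (n:ℤ)) - 1) + (mg p (0, (n:ℤ) * i) - 1) := by
        linear_combination -hm
      rw [key]
      exact dvd_add (dvd_mul_left _ _) ih
  | pred i ih =>
      have h : ((0:ℤ), (n:ℤ) * (-i-1)) + ((0:ℤ), (n:ℤ)) = ((0:ℤ), (n:ℤ) * (-i)) := by
        simp; ring
      have hm : mg p (0, (n:ℤ) * (-i-1)) * mg p (0, (n:ℤ)) = mg p (0, (n:ℤ) * (-i)) := by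
        rw [mg_mul_mg, h]
      have key : mg p (0, (n:ℤ) * (-i - 1)) - 1
          = -(mg p (0, (n:ℤ) * (-i - 1))) * (mg p (0, (n:ℤ)) - 1) + (mg p (0, (n:ℤ) * (-i)) - 1) := by
        linear_combination hm
      rw [key]
      exact dvd_add (dvd_mul_left _ _) ih

lemma rho_single (n : ℕ) (a : ℤ × ℤ) (b : ZMod p) :
    rho p n (AddMonoidAlgebra.single a b) = AddMonoidAlgebra.single (a.1, a.2 % (n:ℤ)) b :=
  AddMonoidAlgebra.mapDomain_single

lemma rho_smul (n : ℕ) (r : ZMod p) (x : SS p) : rho p n (r • x) = r • rho p n x :=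
  by unfold rho; simp

lemma single_sub_rho_dvd (n : ℕ) (a : ℤ × ℤ) (b : ZMod p) :
    (mg p (0, (n : ℤ)) - 1)
      ∣ (AddMonoidAlgebra.single a b - rho p n (AddMonoidAlgebra.single a b)) := by
  rw [rho_single]
  have hidx : ((a.1 : ℤ), a.2 % (n:ℤ)) + ((0:ℤ), a.2 - a.2 % (n:ℤ)) = a := by
    rw [Prod.mk_add_mk, add_zero, add_sub_cancel]
  have key : AddMonoidAlgebra.single a b - AddMonoidAlgebra.single (a.1, a.2 % (n:ℤ)) b
      = AddMonoidAlgebra.single (a.1, a.2 % (n:ℤ)) b * (mg p (0, a.2 - a.2 % (n:ℤ)) - 1) := by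
    rw [mul_sub, mul_one]
    rw [show AddMonoidAlgebra.single ((a.1 : ℤ), a.2 % (n:ℤ)) b * mg p (0, a.2 - a.2 % (n:ℤ))
        = AddMonoidAlgebra.single (((a.1 : ℤ), a.2 % (n:ℤ)) + ((0:ℤ), a.2 - a.2 % (n:ℤ))) (b * 1) from
      AddMonoidAlgebra.single_mul_single ..]
    rw [mul_one, hidx]
  rw [key]
  have hdvd : (n:ℤ) ∣ (a.2 - a.2 % (n:ℤ)) := Int.dvd_self_sub_of_emod_eq rfl
  obtain ⟨t, ht⟩ := hdvd
  rw [ht]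
  exact Dvd.dvd.mul_left (geom p n t) _

lemma sub_rho_dvd (n : ℕ) (x : SS p) : (mg p (0, (n : ℤ)) - 1) ∣ (x - rho p n x) := by
  induction x using AddMonoidAlgebra.induction_on with
  | of g => exact single_sub_rho_dvd p n g 1
  | add f g hf hg =>
      have e3 : (f - rho p n f) + (g - rho p n g) = (f + g) - rho p n (f + g) := by
        rw [rho_add]; ring
      rw [← e3]
      exact dvd_add hf hg
  | smul r f hf =>
      rw [rho_smul, ← smul_sub]
      obtain ⟨c, hc⟩ := hf
      rw [hc, ← mul_smul_comm]
      exact Dvd.intro _ rfl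

lemma rho_zero_dvd (n : ℕ) (x : SS p) (hx : rho p n x = 0) :
    (mg p (0, (n : ℤ)) - 1) ∣ x := by
  have := sub_rho_dvd p n x
  rwa [hx, sub_zero] at this

lemma rho_neg (n : ℕ) (x : SS p) : rho p n (-x) = - rho p n x := by
  rw [← neg_one_smul (ZMod p) x, rho_smul, neg_one_smul]

def lam (a b c d : ℤ) : (ℤ × ℤ) →+ (ℤ × ℤ) :=
  AddMonoidHom.mk' (fun q => (d * q.1 - c * q.2, -b * q.1 + a * q.2))
    (by intro x y; simp only [Prod.ext_iff, Prod.fst_add, Prod.snd_add, Prod.mk_add_mk]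
        constructor <;> ring)

noncomputable def sig (a b c d : ℤ) : SS p →+* SS p :=
  AddMonoidAlgebra.mapDomainRingHom (ZMod p) (lam a b c d)

lemma sig_mg (a b c d : ℤ) (v : ℤ × ℤ) :
    sig p a b c d (mg p v) = mg p (lam a b c d v) := by
  show AddMonoidAlgebra.mapDomain _ (AddMonoidAlgebra.single v (1 : ZMod p)) = _
  rw [AddMonoidAlgebra.mapDomain_single]
  rfl

noncomputable def eps : SS p →ₐ[ZMod p] ZMod p :=
  (AddMonoidAlgebra.lift (ZMod p) (ZMod p) (ℤ × ℤ)) 1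

lemma eps_mg (v : ℤ × ℤ) : eps p (mg p v) = 1 := by
  have hv : mg p v = AddMonoidAlgebra.of (ZMod p) (ℤ × ℤ) (Multiplicative.ofAdd v) := rfl
  rw [hv]
  show ((AddMonoidAlgebra.lift (ZMod p) (ZMod p) (ℤ × ℤ)) 1)
      ((AddMonoidAlgebra.of (ZMod p) (ℤ × ℤ)) (Multiplicative.ofAdd v)) = 1
  rw [AddMonoidAlgebra.lift_of]
  rfl

lemma endgame (a b c d : ℤ) (hD : a * d - b * c ≠ 0)
    (w1 w2 u1 u2 : SS p)
    (h1 : (1 - mg p (c, d)) * w1 + (mg p (a, b) - 1) * u1 = 0)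
    (h2 : (1 - mg p (c, d)) * w2 + (mg p (a, b) - 1) * u2 = 0)
    (h4 : u1 * (mg p (1, 0) - 1) + u2 * (mg p (0, 1) - 1) = mg p (c, d) - 1) : False := by
  set D : ℤ := a * d - b * c with hDdef
  set n : ℕ := D.natAbs with hndef
  have hn0 : n ≠ 0 := Int.natAbs_ne_zero.mpr hD
  have hndvd : (n : ℤ) ∣ D := Int.natAbs_dvd.mpr dvd_rfl
  -- index images
  have lab : lam a b c d (a, b) = (D, 0) := by
    simp only [lam, AddMonoidHom.mk'_apply, hDdef, Prod.mk.injEq]; constructor <;> ring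
  have lcd : lam a b c d (c, d) = (0, D) := by
    simp only [lam, AddMonoidHom.mk'_apply, hDdef, Prod.mk.injEq]; constructor <;> ring
  have lx : lam a b c d (1, 0) = (d, -b) := by
    simp only [lam, AddMonoidHom.mk'_apply, Prod.mk.injEq]; constructor <;> ring
  have ly : lam a b c d (0, 1) = (-c, a) := by
    simp only [lam, AddMonoidHom.mk'_apply, Prod.mk.injEq]; constructor <;> ring
  have E1 : (1 - mg p (0, D)) * sig p a b c d w1 + (mg p (D, 0) - 1) * sig p a b c d u1 = 0 := by
    have := congrArg (sig p a b c d) h1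
    simpa only [map_add, map_mul, map_sub, map_one, map_zero, sig_mg, lab, lcd] using this
  have E2 : (1 - mg p (0, D)) * sig p a b c d w2 + (mg p (D, 0) - 1) * sig p a b c d u2 = 0 := by
    have := congrArg (sig p a b c d) h2
    simpa only [map_add, map_mul, map_sub, map_one, map_zero, sig_mg, lab, lcd] using this
  have E4 : sig p a b c d u1 * (mg p (d, -b) - 1) + sig p a b c d u2 * (mg p (-c, a) - 1)
      = mg p (0, D) - 1 := by
    have := congrArg (sig p a b c d) h4
    simpa only [map_add, map_mul, map_sub, map_one, sig_mg, lab, lcd, lx, ly] using this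
  set W1 := sig p a b c d w1; set W2 := sig p a b c d w2
  set U1 := sig p a b c d u1; set U2 := sig p a b c d u2
  -- apply rho to E1, E2
  have rhoU : ∀ W U : SS p, (1 - mg p (0, D)) * W + (mg p (D, 0) - 1) * U = 0 →
      rho p n U = 0 := by
    intro W U hE
    have hE' : W + mg p (D, 0) * U = mg p (0, D) * W + U := by linear_combination hE
    have := congrArg (rho p n) hE'
    rw [rho_add, rho_add, rho_mg p n D 0 (dvd_zero _), rho_mg p n 0 D hndvd,
      show mg p ((0:ℤ), (0:ℤ)) = 1 from rfl, one_mul] at this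
    have h5 : (mg p (D, 0) - 1) * rho p n U = 0 := by linear_combination this
    rcases mul_eq_zero.mp h5 with h6 | h6
    · exact absurd h6 (mg_sub_one_ne p (by simp [Prod.ext_iff, hD]))
    · exact h6
  obtain ⟨c1, hc1⟩ := rho_zero_dvd p n U1 (rhoU W1 U1 E1)
  obtain ⟨c2, hc2⟩ := rho_zero_dvd p n U2 (rhoU W2 U2 E2)
  -- gamma
  obtain ⟨γ, hγ, hεγ⟩ : ∃ γ : SS p, mg p (0, D) - 1 = (mg p (0, (n:ℤ)) - 1) * γ ∧ eps p γ ≠ 0 := by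
    rcases Int.natAbs_eq D with hcase | hcase
    · refine ⟨1, by rw [mul_one, hndef, ← hcase], by simp⟩
    · refine ⟨-mg p (0, -(n:ℤ)), ?_, ?_⟩
      · have hmm : mg p (0, (n:ℤ)) * mg p (0, -(n:ℤ)) = 1 := by
          rw [mg_mul_mg]; norm_num [show mg p ((0:ℤ), (0:ℤ)) = 1 from rfl]
        have hc' : D = -(n:ℤ) := by rw [hndef]; exact hcase
        rw [hc']
        linear_combination hmm
      · rw [map_neg, eps_mg]
        simp
  rw [hc1, hc2] at E4
  rw [hγ] at E4
  have E5 : (mg p (0, (n:ℤ)) - 1) * (c1 * (mg p (d, -b) - 1) + c2 * (mg p (-c, a) - 1))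
      = (mg p (0, (n:ℤ)) - 1) * γ := by linear_combination E4
  have hne : mg p (0, (n:ℤ)) - 1 ≠ 0 := by
    apply mg_sub_one_ne
    intro hq
    apply hn0
    have h2' := congrArg Prod.snd hq
    simpa using h2'

  have E6 := mul_left_cancel₀ hne E5
  have := congrArg (eps p) E6
  rw [map_add, map_mul, map_mul, map_sub, map_sub, map_one, eps_mg, eps_mg] at this
  simp at this
  exact hεγ this.symm

end prime
end

theorem stmt_8 (w u : FreeGroup (Fin 2))
    (h : expx w * expy u - expy w * expx u ≠ 0) (k : ℕ) (hk : 2 ≤ k) :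
    ¬ ∃ z : FreeGroup (Fin 2),
      ⁅w, u⁆ * (z ^ k)⁻¹ ∈ derivedSeries (FreeGroup (Fin 2)) 2 := by
  rintro ⟨z, hz⟩
  obtain ⟨p, hp, hpk⟩ := Nat.exists_prime_and_dvd (show k ≠ 1 by omega)
  haveI : Fact p.Prime := ⟨hp⟩
  have hmem : psi p (⁅w, u⁆ * (z ^ k)⁻¹) ∈ derivedSeries (MG p) 2 :=
    map_derivedSeries_le_derivedSeries (psi p) 2 (Subgroup.mem_map_of_mem _ hz)
  rw [MG.metab, Subgroup.mem_bot, map_mul, map_inv, map_pow, mul_inv_eq_one] at hmem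
  rw [map_commutatorElement] at hmem
  -- v components
  have hv := congrArg MG.v hmem
  rw [comm_v, pow_v] at hv
  have hk0 : (k : ℤ) ≠ 0 := by exact_mod_cast (by omega : k ≠ 0)
  have hzv : (psi p z).v = 0 := by
    have h1 := congrArg Prod.fst hv
    have h2 := congrArg Prod.snd hv
    rw [Prod.smul_fst] at h1
    rw [Prod.smul_snd] at h2
    rw [nsmul_eq_mul] at h1 h2
    have e1 : (psi p z).v.1 = 0 := by
      rcases mul_eq_zero.mp h1.symm with h' | h'
      · exact absurd h' hk0
      · exact h'
    have e2 : (psi p z).v.2 = 0 := by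
      rcases mul_eq_zero.mp h2.symm with h' | h'
      · exact absurd h' hk0
      · exact h'
    rw [Prod.ext_iff]
    constructor
    · simpa using e1
    · simpa using e2
  -- a and b components
  have ha := congrArg MG.a hmem
  have hb := congrArg MG.b hmem
  rw [comm_a, pow_a p _ hzv, ksmul_zero p k hpk] at ha
  rw [comm_b, pow_b p _ hzv, ksmul_zero p k hpk] at hb
  rw [psi_v p w, psi_v p u] at ha hb
  have h4 := fund p u
  rw [psi_v p u] at h4
  exact endgame p (expx w) (expy w) (expx u) (expy u) h
    (psi p w).a (psi p w).b (psi p u).a (psi p u).b ha hb h4
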